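/- Assume Hypothesis (Contra) and that T is abelian. Then: (i) T is F-conjugate to Q, so there exists α ∈ Iso_F(Q,T) with S_{Q,V}(T) = ^αV; and (ii) for every subgroup K with T < C_K(T) ≤ K ≤ S, the relative trace satisfies tr_T^K(S_{Q,V}(T)) = 0. -/

import Mathlib

open Subgroup

section Core

variable {S : Type*} [Group S]

/-- Conjugation by `s` as a homomorphism between subgroups `P` and `Q` of `S`,
when `s` conjugates `P` into `Q`. -/
def conjMap (s : S) (P Q : Subgroup S) (h : ∀ x ∈ P, s * x * s⁻¹ ∈ Q) : P →* Q where
  toFun x := ⟨s * ↑x * s⁻¹, h x x.2⟩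
  map_one' := by ext; simp
  map_mul' x y := by ext; push_cast; group

/-- The range in `S` of a homomorphism between subgroups of `S`. -/
def rngS {P Q : Subgroup S} (φ : P →* Q) : Subgroup S := (Q.subtype.comp φ).range

lemma rngS_le {P Q : Subgroup S} (φ : P →* Q) : rngS φ ≤ Q := by
  rintro x ⟨y, rfl⟩
  exact (φ y).2

/-- A fusion system on a group `S`: a collection of injective homomorphisms between
the subgroups of `S`, containing all homomorphisms induced by conjugation in `S`,
closed under composition and taking inverses of isomorphisms, and such that every
morphism factors as an isomorphism in the system followed by an inclusion. -/
structure FusionSystem (S : Type*) [Group S] where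
  Hom : ∀ P Q : Subgroup S, Set (P →* Q)
  inj : ∀ {P Q : Subgroup S} (φ : P →* Q), φ ∈ Hom P Q → Function.Injective φ
  conj_mem : ∀ (P Q : Subgroup S) (s : S) (h : ∀ x ∈ P, s * x * s⁻¹ ∈ Q),
    conjMap s P Q h ∈ Hom P Q
  comp_mem : ∀ {P Q R : Subgroup S} (φ : P →* Q) (ψ : Q →* R),
    φ ∈ Hom P Q → ψ ∈ Hom Q R → ψ.comp φ ∈ Hom P R
  inv_mem : ∀ {P Q : Subgroup S} (e : P ≃* Q), e.toMonoidHom ∈ Hom P Q →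
    e.symm.toMonoidHom ∈ Hom Q P
  factor : ∀ {P Q : Subgroup S} (φ : P →* Q) (hφ : φ ∈ Hom P Q),
    ∃ e : P ≃* rngS φ, e.toMonoidHom ∈ Hom P (rngS φ) ∧
      (Subgroup.inclusion (rngS_le φ)).comp e.toMonoidHom = φ

namespace FusionSystem

variable (F : FusionSystem S)

/-- The set of `F`-isomorphisms from `P` to `Q`. -/
def IsoF (P Q : Subgroup S) : Set (P ≃* Q) := {e | e.toMonoidHom ∈ F.Hom P Q}

/-- Two subgroups are `F`-conjugate if they are isomorphic in `F`. -/
def FConj (P Q : Subgroup S) : Prop := ∃ e : P ≃* Q, e.toMonoidHom ∈ F.Hom P Q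

/-- A subgroup `P ≤ S` is `F`-centric if `C_S(Q) ≤ Q` for every `Q` that is
`F`-conjugate to `P`. -/
def Centric (P : Subgroup S) : Prop :=
  ∀ Q : Subgroup S, F.FConj P Q → Subgroup.centralizer (Q : Set S) ≤ Q

end FusionSystem

/-- Conjugation gives a homomorphism from the normalizer of `P` to the automorphisms
of `P`. -/
def conjAut (P : Subgroup S) : Subgroup.normalizer (P : Set S) →* MulAut P where
  toFun g :=
    { toFun := fun x => ⟨↑g * ↑x * (↑g)⁻¹, (mem_normalizer_iff.mp g.2 ↑x).mp x.2⟩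
      invFun := fun x => ⟨(↑g)⁻¹ * ↑x * ↑g, by
        have := (mem_normalizer_iff.mp ((Subgroup.normalizer (P : Set S)).inv_mem g.2) (↑x)).mp x.2
        simpa using this⟩
      left_inv := fun x => by ext; simp [mul_assoc]
      right_inv := fun x => by ext; simp [mul_assoc]
      map_mul' := fun x y => by ext; push_cast; group }
  map_one' := by ext; simp
  map_mul' g h := by ext x; simp only [MulAut.mul_apply, MulEquiv.coe_mk, Equiv.coe_fn_mk]; push_cast; group

namespace FusionSystem

variable (F : FusionSystem S)

/-- The group `Aut_F(P)` of `F`-automorphisms of `P`, as a subgroup of `MulAut P`. -/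
def AutF (P : Subgroup S) : Subgroup (MulAut P) where
  carrier := {e | e.toMonoidHom ∈ F.Hom P P}
  one_mem' := by
    have h : ∀ x ∈ P, (1 : S) * x * (1 : S)⁻¹ ∈ P := by intro x hx; simpa using hx
    have h2 := F.conj_mem P P 1 h
    have he : conjMap (1 : S) P P h = (1 : MulAut P).toMonoidHom := by
      ext x; simp [conjMap]
    rwa [he] at h2
  mul_mem' := by
    intro a b ha hb
    have he : (a * b).toMonoidHom = a.toMonoidHom.comp b.toMonoidHom := by
      ext x; rfl
    simp only [Set.mem_setOf_eq] at *
    rw [he]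
    exact F.comp_mem _ _ hb ha
  inv_mem' := by
    intro a ha
    exact F.inv_mem a ha

end FusionSystem

/-- The inner automorphisms of (the group) `P`, as a subgroup of `MulAut P`. -/
def innAut (P : Type*) [Group P] : Subgroup (MulAut P) := (MulAut.conj : P →* MulAut P).range

lemma innAut_normal (P : Type*) [Group P] : (innAut P).Normal := by
  constructor
  rintro _ ⟨x, rfl⟩ g
  refine ⟨g x, ?_⟩
  ext y
  simp [MulAut.conj]

namespace FusionSystem

variable (F : FusionSystem S)

/-- `Inn(P)` as a subgroup of `Aut_F(P)`. -/
def innFOf (P : Subgroup S) : Subgroup (F.AutF P) := (innAut P).subgroupOf (F.AutF P)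

instance innFOf_normal (P : Subgroup S) : (F.innFOf P).Normal :=
  Subgroup.Normal.subgroupOf (innAut_normal P) _

/-- `Out_F(P) = Aut_F(P)/Inn(P)`. -/
def OutF (P : Subgroup S) : Type _ := F.AutF P ⧸ F.innFOf P

noncomputable instance (P : Subgroup S) : Group (F.OutF P) :=
  inferInstanceAs (Group (F.AutF P ⧸ F.innFOf P))

/-- The quotient map `Aut_F(P) → Out_F(P)`. -/
def outMk (P : Subgroup S) : F.AutF P →* F.OutF P := QuotientGroup.mk' (F.innFOf P)

/-- Conjugation gives a homomorphism `N_S(P) → Aut_F(P)`. -/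
def toAutF (P : Subgroup S) : Subgroup.normalizer (P : Set S) →* F.AutF P :=
  (conjAut P).codRestrict (F.AutF P) (fun g => by
    have h : ∀ x ∈ P, (↑g : S) * x * (↑g : S)⁻¹ ∈ P := fun x hx =>
      (mem_normalizer_iff.mp g.2 x).mp hx
    have h2 := F.conj_mem P P ↑g h
    have he : conjMap (↑g : S) P P h = (conjAut P g).toMonoidHom := by
      ext x; rfl
    rw [he] at h2
    exact h2)

/-- For `K ≤ N_S(P)`, the subgroup `Out_K(P) ≤ Out_F(P)` of classes of automorphisms
induced by conjugation by elements of `K`. -/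
noncomputable def outOf (P K : Subgroup S) (h : K ≤ Subgroup.normalizer (P : Set S)) : Subgroup (F.OutF P) :=
  ((F.outMk P).comp ((F.toAutF P).comp (Subgroup.inclusion h))).range

/-- `Aut_S(P)` as a subgroup of `Aut_F(P)`. -/
def AutSF (P : Subgroup S) : Subgroup (F.AutF P) := (F.toAutF P).range

/-- `P` is fully automized (in `F`, at the prime `p`) if `Aut_S(P)` is a Sylow
`p`-subgroup of `Aut_F(P)`. -/
def FullyAutomized (p : ℕ) [Fact p.Prime] (P : Subgroup S) : Prop :=
  ∃ Syl : Sylow p (F.AutF P), (Syl : Subgroup (F.AutF P)) = F.AutSF P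

/-- `P` is receptive in `F` if every `F`-isomorphism `φ : Q → P` extends to the
subgroup `N_φ = {g ∈ N_S(Q) | φ ∘ c_g ∘ φ⁻¹ ∈ Aut_S(P)}`. -/
def Receptive (P : Subgroup S) : Prop :=
  ∀ (Q : Subgroup S) (φ : Q ≃* P), φ.toMonoidHom ∈ F.Hom Q P →
    ∃ N : Subgroup S,
      (∀ g : S, g ∈ N ↔ ∃ hg : g ∈ Subgroup.normalizer (Q : Set S), ∃ h ∈ Subgroup.normalizer (P : Set S), ∀ q : Q,
        (↑(φ ⟨g * ↑q * g⁻¹, (mem_normalizer_iff.mp hg ↑q).mp q.2⟩) : S)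
          = h * ↑(φ q) * h⁻¹) ∧
      ∃ ψ ∈ F.Hom N ⊤, ∀ (q : S) (hq : q ∈ Q) (hq' : q ∈ N),
        (↑(ψ ⟨q, hq'⟩) : S) = ↑(φ ⟨q, hq⟩)

/-- A fusion system is saturated if every `F`-conjugacy class of subgroups contains a
subgroup that is fully automized and receptive. -/
def Saturated (p : ℕ) [Fact p.Prime] : Prop :=
  ∀ P : Subgroup S, ∃ P' : Subgroup S, F.FConj P P' ∧
    F.FullyAutomized p P' ∧ F.Receptive P'

end FusionSystem

end Core

section SQV

open DirectSum

variable {S : Type*} [Group S]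

namespace FusionSystem

variable (F : FusionSystem S)

/-- Conjugation of `F`-automorphism groups by an `F`-isomorphism `e : Q ≃* L`:
`γ ↦ e⁻¹ ∘ γ ∘ e`. -/
def autConj {Q L : Subgroup S} (e : Q ≃* L) (he : e.toMonoidHom ∈ F.Hom Q L) :
    F.AutF L →* F.AutF Q where
  toFun γ := ⟨(e.trans γ.1).trans e.symm, by
    have h1 : ((e.trans γ.1).trans e.symm).toMonoidHom
        = (e.symm.toMonoidHom.comp γ.1.toMonoidHom).comp e.toMonoidHom := by
      ext x; rfl
    show ((e.trans γ.1).trans e.symm).toMonoidHom ∈ F.Hom Q Q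
    rw [h1]
    exact F.comp_mem _ _ he (F.comp_mem _ _ γ.2 (F.inv_mem e he))⟩
  map_one' := by
    ext x
    simp
  map_mul' a b := by
    ext x
    simp [MulAut.mul_apply]

/-- The induced homomorphism `Out_F(L) → Out_F(Q)` given by `[γ] ↦ [e⁻¹ ∘ γ ∘ e]`. -/
def outConj {Q L : Subgroup S} (e : Q ≃* L) (he : e.toMonoidHom ∈ F.Hom Q L) :
    F.OutF L →* F.OutF Q :=
  QuotientGroup.map _ _ (F.autConj e he) (by
    intro γ hγ
    have hγ' : (γ : MulAut ↥L) ∈ innAut ↥L := hγ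
    obtain ⟨x, hx⟩ := hγ'
    show (F.autConj e he) γ ∈ F.innFOf Q
    refine ⟨e.symm x, ?_⟩
    have hx' : ∀ z : L, (γ : MulAut L) z = x * z * x⁻¹ := by
      intro z
      rw [← hx]
      rfl
    ext y
    simp only [MulAut.conj_apply]
    have h2 : ((F.AutF Q).subtype ((F.autConj e he) γ)) y = e.symm ((γ : MulAut L) (e y)) := rfl
    rw [h2, hx' (e y)]
    push_cast [map_mul, map_inv, MulEquiv.symm_apply_apply]
    ring_nf)

end FusionSystem

/-- The relative trace of an action with respect to a subgroup `K ≤ G`, given by summing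
the action of a set of representatives of the left cosets of `K` in `G`. -/
noncomputable def cosetTrace {p : ℕ} {V : Type*} [AddCommGroup V] [Module (ZMod p) V]
    {G : Type*} [Group G] [Finite G] (K : Subgroup G) (σ : G →* (V →ₗ[ZMod p] V)) :
    V →ₗ[ZMod p] V :=
  haveI : Finite (G ⧸ K) := Quotient.finite _
  haveI := Fintype.ofFinite (G ⧸ K)
  ∑ x : G ⧸ K, σ (Quotient.out x)

namespace FusionSystem

variable (F : FusionSystem S)

/-- A choice of an `F`-isomorphism `Q ≃* L` for `F`-conjugate subgroups. -/
noncomputable def chosenIso {Q L : Subgroup S} (hc : F.FConj Q L) : Q ≃* L := hc.choose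

lemma chosenIso_mem {Q L : Subgroup S} (hc : F.FConj Q L) :
    (F.chosenIso hc).toMonoidHom ∈ F.Hom Q L := hc.choose_spec

end FusionSystem

/-- The conjugate `ˣL` of a subgroup. -/
def conjSub (x : S) (L : Subgroup S) : Subgroup S :=
  Subgroup.map (MulAut.conj x).toMonoidHom L

lemma conjSub_one (L : Subgroup S) : conjSub 1 L = L := by
  ext z
  simp [conjSub, Subgroup.mem_map, MulAut.conj_apply]

lemma conjSub_mul (x y : S) (L : Subgroup S) :
    conjSub (x * y) L = conjSub x (conjSub y L) := by
  ext z
  simp only [conjSub, Subgroup.mem_map, MulEquiv.coe_toMonoidHom, MulAut.conj_apply]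
  constructor
  · rintro ⟨a, ha, rfl⟩
    exact ⟨y * a * y⁻¹, ⟨a, ha, rfl⟩, by group⟩
  · rintro ⟨b, ⟨a, ha, rfl⟩, rfl⟩
    exact ⟨a, ha, by group⟩

/-- Conjugation as an isomorphism `L ≃* ˣL = L'`. -/
def conjEquiv (r : S) (L L' : Subgroup S) (h : conjSub r L = L') : L ≃* L' :=
  (MulEquiv.subgroupMap (MulAut.conj r) L).trans (MulEquiv.subgroupCongr h)

lemma conjEquiv_mem (F : FusionSystem S) (r : S) (L L' : Subgroup S) (h : conjSub r L = L') :
    (conjEquiv r L L' h).toMonoidHom ∈ F.Hom L L' := by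
  have hmem : ∀ x ∈ L, r * x * r⁻¹ ∈ L' := by
    intro x hx
    rw [← h]
    exact ⟨x, hx, rfl⟩
  have he : conjMap r L L' hmem = (conjEquiv r L L' h).toMonoidHom := by
    ext x; rfl
  rw [← he]
  exact F.conj_mem L L' r hmem

namespace FusionSystem

variable (F : FusionSystem S) {Q₀ : Subgroup S}
variable {p : ℕ} {V : Type*} [AddCommGroup V] [Module (ZMod p) V]

/-- The action of `N_P(L)` on `V` twisted by an `F`-isomorphism `α : Q₀ ≃* L`, i.e. the
action of `N_P(L)` on `^αV` through `N_P(L) → Out_F(L) → Out_F(Q₀)`. -/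
noncomputable def dpActionAt (ρ : Representation (ZMod p) (F.OutF Q₀) V)
    {L : Subgroup S} (α : Q₀ ≃* L) (hα : α.toMonoidHom ∈ F.Hom Q₀ L) (P : Subgroup S) :
    ↥(P ⊓ Subgroup.normalizer (L : Set S)) →* (V →ₗ[ZMod p] V) :=
  (((ρ : F.OutF Q₀ →* (V →ₗ[ZMod p] V)).comp (F.outConj α hα)).comp (F.outMk L)).comp
    ((F.toAutF L).comp (Subgroup.inclusion inf_le_right))

/-- The action of `N_P(L)` on `^αV` for the chosen isomorphism `α : Q₀ ≃* L`. -/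
noncomputable def dpAction (ρ : Representation (ZMod p) (F.OutF Q₀) V)
    {L : Subgroup S} (hc : F.FConj Q₀ L) (P : Subgroup S) :
    ↥(P ⊓ Subgroup.normalizer (L : Set S)) →* (V →ₗ[ZMod p] V) :=
  F.dpActionAt ρ (F.chosenIso hc) (F.chosenIso_mem hc) P

variable [Finite S]

/-- The summand `V_{α,L}(P) = tr_L^{N_P(L)}(^αV)` of the Díaz–Park Mackey functor. -/
noncomputable def dpSummand (ρ : Representation (ZMod p) (F.OutF Q₀) V)
    (P : Subgroup S) {L : Subgroup S} (hc : F.FConj Q₀ L) : Submodule (ZMod p) V :=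
  LinearMap.range (cosetTrace (L.subgroupOf (P ⊓ Subgroup.normalizer (L : Set S))) (F.dpAction ρ hc P))

/-- The setoid of `P`-conjugacy on the subgroups of `P` that are `F`-conjugate to `Q₀`. -/
def dpRel (Q₀ P : Subgroup S) : Setoid {L : Subgroup S // L ≤ P ∧ F.FConj Q₀ L} where
  r L₁ L₂ := ∃ x ∈ P, conjSub x L₁.1 = L₂.1
  iseqv := by
    constructor
    · intro L
      exact ⟨1, P.one_mem, conjSub_one _⟩
    · rintro L₁ L₂ ⟨x, hx, hconj⟩
      refine ⟨x⁻¹, P.inv_mem hx, ?_⟩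
      rw [← hconj, ← conjSub_mul]
      simp [conjSub_one]
    · rintro L₁ L₂ L₃ ⟨x, hx, hx'⟩ ⟨y, hy, hy'⟩
      exact ⟨y * x, P.mul_mem hy hx, by rw [conjSub_mul, hx', hy']⟩

/-- The index set of the Díaz–Park direct sum decomposition of `S_{Q₀,V}(P)`:
`P`-conjugacy classes of subgroups of `P` that are `F`-conjugate to `Q₀`. -/
def SQVIndex (Q₀ P : Subgroup S) : Type _ := Quotient (F.dpRel Q₀ P)

/-- The chosen representative of a `P`-conjugacy class. -/
noncomputable def dpRep {Q₀ P : Subgroup S} (c : F.SQVIndex Q₀ P) : Subgroup S :=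
  (Quotient.out c).1

lemma dpRep_le {Q₀ P : Subgroup S} (c : F.SQVIndex Q₀ P) : F.dpRep c ≤ P :=
  (Quotient.out c).2.1

lemma dpRep_fconj {Q₀ P : Subgroup S} (c : F.SQVIndex Q₀ P) : F.FConj Q₀ (F.dpRep c) :=
  (Quotient.out c).2.2

/-- The value `S_{Q₀,V}(P)` of the Díaz–Park Mackey functor:
the direct sum of `tr_L^{N_P(L)}(^αV)` over the `P`-conjugacy classes of subgroups `L ≤ P`
`F`-conjugate to `Q₀` (with chosen representatives and chosen isomorphisms). -/
noncomputable abbrev SQVModule (ρ : Representation (ZMod p) (F.OutF Q₀) V) (P : Subgroup S) :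
    Type _ :=
  ⨁ (c : F.SQVIndex Q₀ P), ↥(F.dpSummand ρ P (F.dpRep_fconj c))

/-- The inclusion of the summand indexed by the class `c` into `S_{Q₀,V}(P)`. -/
noncomputable def dpOf (ρ : Representation (ZMod p) (F.OutF Q₀) V) (P : Subgroup S)
    (c : F.SQVIndex Q₀ P) :
    ↥(F.dpSummand ρ P (F.dpRep_fconj c)) →ₗ[ZMod p] F.SQVModule ρ P :=
  letI := Classical.decEq (F.SQVIndex Q₀ P)
  DirectSum.lof (ZMod p) (F.SQVIndex Q₀ P) (fun c => ↥(F.dpSummand ρ P (F.dpRep_fconj c))) c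

/-- The component of an element of `S_{Q₀,V}(P)` at the class `c`, as an element of `V`. -/
noncomputable def dpComp {ρ : Representation (ZMod p) (F.OutF Q₀) V} {P : Subgroup S}
    (x : F.SQVModule ρ P) (c : F.SQVIndex Q₀ P) : V :=
  ((x : ⨁ (c : F.SQVIndex Q₀ P), ↥(F.dpSummand ρ P (F.dpRep_fconj c))) c : V)

/-- The element `[α_{L'}⁻¹ ∘ c_r ∘ α_L] ∈ Aut_F(Q₀)` transporting between the twisted
modules `^{c_r ∘ α_L}V` and `^{α_{L'}}V`. -/
noncomputable def transport {Q₀ L L' : Subgroup S} (hc : F.FConj Q₀ L) (hc' : F.FConj Q₀ L')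
    (r : S) (h : conjSub r L = L') : F.AutF Q₀ :=
  ⟨((F.chosenIso hc).trans (conjEquiv r L L' h)).trans (F.chosenIso hc').symm, by
    show (((F.chosenIso hc).trans (conjEquiv r L L' h)).trans (F.chosenIso hc').symm).toMonoidHom
      ∈ F.Hom Q₀ Q₀
    have h1 : (((F.chosenIso hc).trans (conjEquiv r L L' h)).trans
        (F.chosenIso hc').symm).toMonoidHom
        = ((F.chosenIso hc').symm.toMonoidHom.comp (conjEquiv r L L' h).toMonoidHom).comp
          (F.chosenIso hc).toMonoidHom := by
      ext x; rfl
    rw [h1]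
    exact F.comp_mem _ _ (F.chosenIso_mem hc)
      (F.comp_mem _ _ (conjEquiv_mem F r L L' h) (F.inv_mem _ (F.chosenIso_mem hc')))⟩

/-- The image of `transport` in `Out_F(Q₀)`. -/
noncomputable def outTransport {Q₀ L L' : Subgroup S} (hc : F.FConj Q₀ L)
    (hc' : F.FConj Q₀ L') (r : S) (h : conjSub r L = L') : F.OutF Q₀ :=
  F.outMk Q₀ (F.transport hc hc' r h)

/-- The relative trace `tr_{N_T(L)}^{N_R(L)}` on `^αV`, for `T ≤ R`. -/
noncomputable def dpIndTrace (ρ : Representation (ZMod p) (F.OutF Q₀) V)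
    {L : Subgroup S} (hc : F.FConj Q₀ L) (T R : Subgroup S) (hTR : T ≤ R) :
    V →ₗ[ZMod p] V :=
  cosetTrace ((T ⊓ Subgroup.normalizer (L : Set S)).subgroupOf (R ⊓ Subgroup.normalizer (L : Set S))) (F.dpAction ρ hc R)

/-- The restriction and induction maps of the Díaz–Park Mackey functor `S_{Q₀,V}`,
characterized on each direct summand by the formulas of Díaz–Park:
restriction along `T ≤ P` maps the summand of the class of `L` diagonally (via the
identifications `^{c_r∘α_L}V ≅ ^{α_{L'}}V`) into the summands of the `T`-classes of the
`P`-conjugates `L'` of `L` contained in `T`, and is zero on all other components;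
induction along `T ≤ R` maps the summand of the class of `L` into the summand of the
`R`-class of `L` by the relative trace `tr_{N_T(L)}^{N_R(L)}`. -/
structure SQVMaps (ρ : Representation (ZMod p) (F.OutF Q₀) V) where
  res : ∀ {T P : Subgroup S}, T ≤ P → (F.SQVModule ρ P →ₗ[ZMod p] F.SQVModule ρ T)
  ind : ∀ {T R : Subgroup S}, T ≤ R → (F.SQVModule ρ T →ₗ[ZMod p] F.SQVModule ρ R)
  res_spec : ∀ {T P : Subgroup S} (hTP : T ≤ P) (c : F.SQVIndex Q₀ P)
    (v : ↥(F.dpSummand ρ P (F.dpRep_fconj c))) (c' : F.SQVIndex Q₀ T)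
    (r : S), r ∈ P → (h : conjSub r (F.dpRep c) = F.dpRep c') →
      F.dpComp (res hTP (F.dpOf ρ P c v)) c'
        = ρ (F.outTransport (F.dpRep_fconj c) (F.dpRep_fconj c') r h) (v : V)
  res_spec₂ : ∀ {T P : Subgroup S} (hTP : T ≤ P) (c : F.SQVIndex Q₀ P)
    (v : ↥(F.dpSummand ρ P (F.dpRep_fconj c))) (c' : F.SQVIndex Q₀ T),
      (¬ ∃ r ∈ P, conjSub r (F.dpRep c) = F.dpRep c') →
      F.dpComp (res hTP (F.dpOf ρ P c v)) c' = 0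
  ind_spec : ∀ {T R : Subgroup S} (hTR : T ≤ R) (c : F.SQVIndex Q₀ T)
    (v : ↥(F.dpSummand ρ T (F.dpRep_fconj c))) (c' : F.SQVIndex Q₀ R)
    (r : S), r ∈ R → (h : conjSub r (F.dpRep c) = F.dpRep c') →
      F.dpComp (ind hTR (F.dpOf ρ T c v)) c'
        = ρ (F.outTransport (F.dpRep_fconj c) (F.dpRep_fconj c') r h)
            (F.dpIndTrace ρ (F.dpRep_fconj c) T R hTR (v : V))
  ind_spec₂ : ∀ {T R : Subgroup S} (hTR : T ≤ R) (c : F.SQVIndex Q₀ T)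
    (v : ↥(F.dpSummand ρ T (F.dpRep_fconj c))) (c' : F.SQVIndex Q₀ R),
      (¬ ∃ r ∈ R, conjSub r (F.dpRep c) = F.dpRep c') →
      F.dpComp (ind hTR (F.dpOf ρ T c v)) c' = 0

/-- A representation is simple (irreducible) if the module is nonzero and has no proper
nonzero invariant submodules. -/
def IsSimpleRep (ρ : Representation (ZMod p) (F.OutF Q₀) V) : Prop :=
  Nontrivial V ∧ ∀ W : Submodule (ZMod p) V,
    (∀ (g : F.OutF Q₀), ∀ v ∈ W, ρ g v ∈ W) → W = ⊥ ∨ W = ⊤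

end FusionSystem

end SQV

section AuxProof

variable {S : Type*} [Group S]

lemma mem_normalizer_of_mem_centralizer {L : Subgroup S} {g : S}
    (hg : g ∈ Subgroup.centralizer (L : Set S)) : g ∈ Subgroup.normalizer (L : Set S) := by
  rw [Subgroup.mem_normalizer_iff]
  intro h
  constructor
  · intro hh
    have h1 : h * g = g * h := Subgroup.mem_centralizer_iff.mp hg h hh
    have h2 : g * h * g⁻¹ = h := by rw [← h1]; group
    rwa [h2]
  · intro hh
    have h1 : (g * h * g⁻¹) * g = g * (g * h * g⁻¹) :=
      Subgroup.mem_centralizer_iff.mp hg _ hh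
    have h2 : g * h = g * (g * h * g⁻¹) := by rw [← h1]; group
    have h3 := mul_left_cancel h2
    rw [h3]; exact hh

lemma pdvd_card_quot {p : ℕ} [hp : Fact p.Prime] {G : Type*} [Group G] [Finite G]
    (hG : IsPGroup p G) (H : Subgroup G) (hH : H ≠ ⊤) : p ∣ Nat.card (G ⧸ H) := by
  obtain ⟨n, hn⟩ := hG.exists_card_eq
  have hdvd : H.index ∣ p ^ n := hn ▸ H.index_dvd_card
  obtain ⟨k, _hk, hek⟩ := (Nat.dvd_prime_pow hp.out).mp hdvd
  have hk0 : k ≠ 0 := by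
    rintro rfl
    exact hH (Subgroup.index_eq_one.mp (by simpa using hek))
  have hcard : Nat.card (G ⧸ H) = H.index := rfl
  rw [hcard, hek]
  exact dvd_pow_self p hk0

lemma dpAction_eq_one (F : FusionSystem S)
    {p : ℕ} {V : Type*} [AddCommGroup V] [Module (ZMod p) V]
    {Q₀ : Subgroup S} (ρ : Representation (ZMod p) (F.OutF Q₀) V)
    {L : Subgroup S} (hc : F.FConj Q₀ L) (K : Subgroup S)
    (g : ↥(K ⊓ Subgroup.normalizer (L : Set S))) (hg : (g : S) ∈ Subgroup.centralizer (L : Set S)) :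
    F.dpAction ρ hc K g = 1 := by
  have h1 : (F.toAutF L)
      (Subgroup.inclusion (inf_le_right : K ⊓ Subgroup.normalizer (L : Set S) ≤ Subgroup.normalizer (L : Set S)) g) = 1 := by
    apply Subtype.ext
    apply MulEquiv.ext
    intro x
    apply Subtype.ext
    show (g : S) * (x : S) * (g : S)⁻¹ = (x : S)
    have h2 : (x : S) * g = g * x := Subgroup.mem_centralizer_iff.mp hg x x.2
    rw [← h2]; group
  unfold FusionSystem.dpAction FusionSystem.dpActionAt
  simp only [MonoidHom.comp_apply]
  rw [h1]
  simp only [map_one]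

lemma cosetTrace_sum_repr {p : ℕ} {V : Type*} [AddCommGroup V] [Module (ZMod p) V]
    {G : Type*} [Group G] [Finite G] (K : Subgroup G) (σ : G →* (V →ₗ[ZMod p] V))
    (h : ∀ (_inst : Fintype (G ⧸ K)), (∑ x : G ⧸ K, σ (Quotient.out x)) = 0) :
    cosetTrace K σ = 0 := h _

lemma sum_trace_eq_zero_of_forall_one {p : ℕ} {V : Type*} [AddCommGroup V]
    [Module (ZMod p) V] {G : Type*} [Group G] [Finite G] (K : Subgroup G)
    (σ : G →* (V →ₗ[ZMod p] V)) (hσ : ∀ g, σ g = 1) (hdvd : p ∣ Nat.card (G ⧸ K))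
    [Fintype (G ⧸ K)] : (∑ x : G ⧸ K, σ (Quotient.out x)) = 0 := by
  have hcard : ((Nat.card (G ⧸ K) : ZMod p)) = 0 :=
    (ZMod.natCast_eq_zero_iff _ _).mpr hdvd
  simp only [hσ]
  rw [Finset.sum_const, Finset.card_univ, ← Nat.card_eq_fintype_card,
    ← Nat.cast_smul_eq_nsmul (ZMod p), hcard, zero_smul]

lemma cosetTrace_eq_zero_of_forall_one {p : ℕ} {V : Type*} [AddCommGroup V]
    [Module (ZMod p) V] {G : Type*} [Group G] [Finite G] (K : Subgroup G)
    (σ : G →* (V →ₗ[ZMod p] V)) (hσ : ∀ g, σ g = 1) (hdvd : p ∣ Nat.card (G ⧸ K)) :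
    cosetTrace K σ = 0 :=
  cosetTrace_sum_repr K σ fun inst =>
    @sum_trace_eq_zero_of_forall_one p V _ _ G _ _ K σ hσ hdvd inst

lemma quotientEquivProdOfLE_fst {G : Type*} [Group G] {T C : Subgroup G} (hTC : T ≤ C)
    (g : G) : ((Subgroup.quotientEquivProdOfLE hTC) ((g : G ⧸ T))).1 = (g : G ⧸ C) := rfl

lemma sum_trace_eq_zero_of_le {p : ℕ} {V : Type*} [AddCommGroup V] [Module (ZMod p) V]
    {G : Type*} [Group G] [Finite G] {T C : Subgroup G} (hTC : T ≤ C)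
    (σ : G →* (V →ₗ[ZMod p] V)) (hσ : ∀ c : G, c ∈ C → σ c = 1)
    (hdvd : p ∣ Nat.card (↥C ⧸ T.subgroupOf C)) [Fintype (G ⧸ T)] :
    (∑ x : G ⧸ T, σ (Quotient.out x)) = 0 := by
  haveI instC : Fintype (G ⧸ C) := Fintype.ofFinite _
  haveI instZ : Fintype (↥C ⧸ T.subgroupOf C) := Fintype.ofFinite _
  have key : ∀ g g' : G, ((g : G ⧸ C)) = ((g' : G ⧸ C)) → σ g = σ g' := by
    intro g g' h
    have hm : g⁻¹ * g' ∈ C := QuotientGroup.eq.mp h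
    have h2 : g' = g * (g⁻¹ * g') := by group
    rw [h2, map_mul, hσ _ hm, mul_one]
  have step : ∀ x : G ⧸ T,
      σ (Quotient.out x)
        = σ (Quotient.out ((Subgroup.quotientEquivProdOfLE hTC) x).1) := by
    intro x
    apply key
    have h1 : ((Subgroup.quotientEquivProdOfLE hTC) x).1
        = ((Quotient.out x : G) : G ⧸ C) := by
      conv_lhs => rw [← Quotient.out_eq x]
      exact quotientEquivProdOfLE_fst hTC _
    rw [h1]
    exact (Quotient.out_eq _).symm
  calc (∑ x : G ⧸ T, σ (Quotient.out x))
      = ∑ x : G ⧸ T, (fun w : (G ⧸ C) × (↥C ⧸ T.subgroupOf C) => σ (Quotient.out w.1))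
          ((Subgroup.quotientEquivProdOfLE hTC) x) :=
        Finset.sum_congr rfl fun x _ => step x
    _ = ∑ w : (G ⧸ C) × (↥C ⧸ T.subgroupOf C), σ (Quotient.out w.1) := by
        apply Fintype.sum_equiv (Subgroup.quotientEquivProdOfLE hTC)
        intro x
        rfl
    _ = ∑ y : G ⧸ C, ∑ _z : ↥C ⧸ T.subgroupOf C, σ (Quotient.out y) :=
        by simp only [Fintype.sum_prod_type]
    _ = 0 := by
        refine Finset.sum_eq_zero fun y _ => ?_
        rw [Finset.sum_const, Finset.card_univ, ← Nat.card_eq_fintype_card,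
          ← Nat.cast_smul_eq_nsmul (ZMod p),
          (ZMod.natCast_eq_zero_iff _ _).mpr hdvd, zero_smul]

lemma cosetTrace_eq_zero_of_le {p : ℕ} {V : Type*} [AddCommGroup V] [Module (ZMod p) V]
    {G : Type*} [Group G] [Finite G] {T C : Subgroup G} (hTC : T ≤ C)
    (σ : G →* (V →ₗ[ZMod p] V)) (hσ : ∀ c : G, c ∈ C → σ c = 1)
    (hdvd : p ∣ Nat.card (↥C ⧸ T.subgroupOf C)) : cosetTrace T σ = 0 :=
  cosetTrace_sum_repr T σ fun inst =>
    @sum_trace_eq_zero_of_le p V _ _ G _ _ T C hTC σ hσ hdvd inst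

lemma cosetTrace_of_subsingleton {p : ℕ} {V : Type*} [AddCommGroup V]
    [Module (ZMod p) V] {G : Type*} [Group G] [Finite G] (K : Subgroup G)
    (σ : G →* (V →ₗ[ZMod p] V)) [Subsingleton (G ⧸ K)] :
    cosetTrace K σ = σ (Quotient.out (((1 : G) : G ⧸ K))) := by
  have h : ∀ (inst : Fintype (G ⧸ K)),
      (∑ x : G ⧸ K, σ (Quotient.out x)) = σ (Quotient.out (((1 : G) : G ⧸ K))) :=
    fun inst => Fintype.sum_subsingleton _ _
  exact h _

end AuxProof

/-- Lemma 3.6: under Hypothesis (Contra), if `T = P ∩ R` is abelian then: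
(i) `T` is `F`-conjugate to `Q` and `S_{Q,V}(T) = ^αV` (the summand of the class of `T`
itself is all of `V` and all other summands vanish); (ii) for every `K` with
`T < C_K(T) ≤ K ≤ S` (and `K ≤ N_S(T)`, so that `K` acts on `^αV`), the relative trace
`tr_T^K` vanishes on `S_{Q,V}(T) = ^αV`. -/
theorem contra_T_abelian
    (p : ℕ) [Fact p.Prime] (hodd : Odd p) {S : Type*} [Group S] [Finite S]
    (hS : IsPGroup p S) (F : FusionSystem S) (hF : F.Saturated p)
    (Q₀ : Subgroup S) (hQ : ¬ F.Centric Q₀)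
    (V : Type*) [AddCommGroup V] [Module (ZMod p) V]
    (ρ : Representation (ZMod p) (F.OutF Q₀) V) (hρ : F.IsSimpleRep ρ)
    (M : F.SQVMaps ρ) (P R : Subgroup S) (hP : F.Centric P) (hR : F.Centric R)
    (hT : ¬ F.Centric (P ⊓ R))
    (hcomp : (M.ind (inf_le_right : P ⊓ R ≤ R)).comp
      (M.res (inf_le_left : P ⊓ R ≤ P)) ≠ 0)
    (habT : IsMulCommutative (P ⊓ R : Subgroup S)) :
    ∃ hc : F.FConj Q₀ (P ⊓ R),
      F.dpSummand ρ (P ⊓ R) hc = ⊤ ∧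
      (∀ c : F.SQVIndex Q₀ (P ⊓ R), F.dpRep c ≠ P ⊓ R →
        F.dpSummand ρ (P ⊓ R) (F.dpRep_fconj c) = ⊥) ∧
      ∀ K : Subgroup S, K ≤ Subgroup.normalizer ((P ⊓ R : Subgroup S) : Set S) →
        P ⊓ R < K ⊓ Subgroup.centralizer ((P ⊓ R : Subgroup S) : Set S) →
        ∀ v : V,
          cosetTrace ((P ⊓ R).subgroupOf (K ⊓ Subgroup.normalizer ((P ⊓ R : Subgroup S) : Set S)))
            (F.dpAction ρ hc K) v = 0 := by
  haveI := habT
  -- every element of `P ⊓ R` centralizes every subgroup of `P ⊓ R`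
  have hcentral : ∀ (L : Subgroup S), L ≤ P ⊓ R → ∀ g ∈ P ⊓ R,
      g ∈ Subgroup.centralizer (L : Set S) := by
    intro L hL g hg
    rw [Subgroup.mem_centralizer_iff]
    intro h hh
    exact Subgroup.mul_comm_of_mem_isMulCommutative (H := P ⊓ R) (hL hh) hg
  -- (A): summands at proper subgroups of `P ⊓ R` vanish
  have hbot : ∀ c : F.SQVIndex Q₀ (P ⊓ R), F.dpRep c ≠ P ⊓ R →
      F.dpSummand ρ (P ⊓ R) (F.dpRep_fconj c) = ⊥ := by
    intro c hne
    have hLle : F.dpRep c ≤ P ⊓ R := F.dpRep_le c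
    have htriv : ∀ g : ↥((P ⊓ R) ⊓ Subgroup.normalizer ((F.dpRep c : Subgroup S) : Set S)),
        F.dpAction ρ (F.dpRep_fconj c) (P ⊓ R) g = 1 := fun g =>
      dpAction_eq_one F ρ _ _ g (hcentral _ hLle _ g.2.1)
    obtain ⟨t, htT, htL⟩ := SetLike.exists_of_lt (lt_of_le_of_ne hLle hne)
    have htG : t ∈ (P ⊓ R) ⊓ Subgroup.normalizer ((F.dpRep c : Subgroup S) : Set S) :=
      ⟨htT, mem_normalizer_of_mem_centralizer (hcentral _ hLle t htT)⟩
    have hne_top : (F.dpRep c).subgroupOf ((P ⊓ R) ⊓ Subgroup.normalizer ((F.dpRep c : Subgroup S) : Set S)) ≠ ⊤ := by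
      intro htop
      apply htL
      have h1 : (⟨t, htG⟩ : ↥((P ⊓ R) ⊓ Subgroup.normalizer ((F.dpRep c : Subgroup S) : Set S)))
          ∈ (F.dpRep c).subgroupOf ((P ⊓ R) ⊓ Subgroup.normalizer ((F.dpRep c : Subgroup S) : Set S)) := by
        rw [htop]; exact Subgroup.mem_top _
      exact Subgroup.mem_subgroupOf.mp h1
    have hzero : cosetTrace ((F.dpRep c).subgroupOf ((P ⊓ R) ⊓ Subgroup.normalizer ((F.dpRep c : Subgroup S) : Set S)))
        (F.dpAction ρ (F.dpRep_fconj c) (P ⊓ R)) = 0 :=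
      cosetTrace_eq_zero_of_forall_one _ _ htriv
        (pdvd_card_quot (hS.to_subgroup _) _ hne_top)
    unfold FusionSystem.dpSummand
    rw [hzero, LinearMap.range_zero]
  -- existence of a nonzero summand
  have hex : ∃ c : F.SQVIndex Q₀ (P ⊓ R),
      F.dpSummand ρ (P ⊓ R) (F.dpRep_fconj c) ≠ ⊥ := by
    by_contra hall
    push_neg at hall
    apply hcomp
    haveI hss : ∀ c : F.SQVIndex Q₀ (P ⊓ R),
        Subsingleton ↥(F.dpSummand ρ (P ⊓ R) (F.dpRep_fconj c)) := fun c =>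
      Submodule.subsingleton_iff_eq_bot.mpr (hall c)
    apply LinearMap.ext
    intro x
    have hres : M.res (inf_le_left : P ⊓ R ≤ P) x = 0 := Subsingleton.elim _ _
    rw [LinearMap.comp_apply, hres, map_zero]
    rfl
  obtain ⟨c₀, hc₀⟩ := hex
  have hrep : F.dpRep c₀ = P ⊓ R := by
    by_contra h
    exact hc₀ (hbot c₀ h)
  have hc : F.FConj Q₀ (P ⊓ R) := hrep ▸ F.dpRep_fconj c₀
  -- (B): the summand at `P ⊓ R` itself is everything
  have htop : F.dpSummand ρ (P ⊓ R) hc = ⊤ := by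
    have hHtop : (P ⊓ R).subgroupOf ((P ⊓ R) ⊓ Subgroup.normalizer ((P ⊓ R : Subgroup S) : Set S)) = ⊤ := by
      rw [eq_top_iff]
      intro g _
      exact Subgroup.mem_subgroupOf.mpr g.2.1
    haveI hss : Subsingleton (↥((P ⊓ R) ⊓ Subgroup.normalizer ((P ⊓ R : Subgroup S) : Set S))
        ⧸ (P ⊓ R).subgroupOf ((P ⊓ R) ⊓ Subgroup.normalizer ((P ⊓ R : Subgroup S) : Set S))) := by
      rw [hHtop]
      exact QuotientGroup.subsingleton_quotient_top
    unfold FusionSystem.dpSummand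
    rw [cosetTrace_of_subsingleton, LinearMap.range_eq_top]
    have hsur : ∀ g : ↥((P ⊓ R) ⊓ Subgroup.normalizer ((P ⊓ R : Subgroup S) : Set S)),
        Function.Surjective ⇑(F.dpAction ρ hc (P ⊓ R) g) := by
      intro g v
      refine ⟨F.dpAction ρ hc (P ⊓ R) g⁻¹ v, ?_⟩
      rw [← Module.End.mul_apply, ← map_mul, mul_inv_cancel, map_one]
      rfl
    exact hsur _
  refine ⟨hc, htop, hbot, ?_⟩
  -- (C): the relative traces vanish
  intro K hKn hlt v
  have hzero : cosetTrace ((P ⊓ R).subgroupOf (K ⊓ Subgroup.normalizer ((P ⊓ R : Subgroup S) : Set S)))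
      (F.dpAction ρ hc K) = 0 := by
    have hTC : (P ⊓ R).subgroupOf (K ⊓ Subgroup.normalizer ((P ⊓ R : Subgroup S) : Set S))
        ≤ (K ⊓ Subgroup.centralizer ((P ⊓ R : Subgroup S) : Set S)).subgroupOf
            (K ⊓ Subgroup.normalizer ((P ⊓ R : Subgroup S) : Set S)) := by
      intro g hg
      exact Subgroup.mem_subgroupOf.mpr (hlt.le (Subgroup.mem_subgroupOf.mp hg))
    refine cosetTrace_eq_zero_of_le hTC _ ?_ ?_
    · intro c hcC
      exact dpAction_eq_one F ρ hc K c (Subgroup.mem_subgroupOf.mp hcC).2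
    · refine pdvd_card_quot ((hS.to_subgroup _).to_subgroup _) _ ?_
      obtain ⟨g, hgKC, hgT⟩ := SetLike.exists_of_lt hlt
      have hgG : g ∈ K ⊓ Subgroup.normalizer ((P ⊓ R : Subgroup S) : Set S) := ⟨hgKC.1, hKn hgKC.1⟩
      intro htop'
      apply hgT
      have h1 : (⟨⟨g, hgG⟩, Subgroup.mem_subgroupOf.mpr hgKC⟩ :
          ↥((K ⊓ Subgroup.centralizer ((P ⊓ R : Subgroup S) : Set S)).subgroupOf
            (K ⊓ Subgroup.normalizer ((P ⊓ R : Subgroup S) : Set S))))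
          ∈ ((P ⊓ R).subgroupOf (K ⊓ Subgroup.normalizer ((P ⊓ R : Subgroup S) : Set S))).subgroupOf
              ((K ⊓ Subgroup.centralizer ((P ⊓ R : Subgroup S) : Set S)).subgroupOf
                (K ⊓ Subgroup.normalizer ((P ⊓ R : Subgroup S) : Set S))) := by
        rw [htop']; exact Subgroup.mem_top _
      exact Subgroup.mem_subgroupOf.mp (Subgroup.mem_subgroupOf.mp h1)
  rw [hzero]
  rfl
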